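/- The partial derivative of the call price C with respect to the strike K (the strike delta) equals -e^{-rτ}·Φ(d_{t,2}^α), where τ = T - t. -/
import Mathlib


open Real

/-- Standard normal CDF. -/
noncomputable def Phi (d : ℝ) : ℝ :=
  ∫ u in Set.Iic d, Real.exp (-u ^ 2 / 2) / Real.sqrt (2 * Real.pi)

/-- d_{t,1}^α of the crisis model. -/
noncomputable def d1 (s K σ α r t T : ℝ) : ℝ :=
  (Real.log ((s + α / σ * Real.exp (r * t)) / (K + α / σ * Real.exp (r * T)))
    + (r + σ ^ 2 / 2) * (T - t)) / (σ * Real.sqrt (T - t))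

/-- d_{t,2}^α of the crisis model. -/
noncomputable def d2 (s K σ α r t T : ℝ) : ℝ :=
  d1 s K σ α r t T - σ * Real.sqrt (T - t)

/-- Crisis-model European call price. -/
noncomputable def C (s K σ α r t T : ℝ) : ℝ :=
  (s + α / σ * Real.exp (r * t)) * Phi (d1 s K σ α r t T)
    - (K * Real.exp (-r * (T - t)) + α / σ * Real.exp (r * t)) * Phi (d2 s K σ α r t T)

lemma gauss_integrable :
    MeasureTheory.Integrable (fun u : ℝ => Real.exp (-u ^ 2 / 2) / Real.sqrt (2 * Real.pi)) := by
  have h : MeasureTheory.Integrable (fun u : ℝ => Real.exp (-(1/2) * u ^ 2)) :=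
    integrable_exp_neg_mul_sq (by norm_num)
  have := h.div_const (Real.sqrt (2 * Real.pi))
  refine this.congr (Filter.Eventually.of_forall fun u => ?_)
  ring_nf

lemma hasDerivAt_Phi (d : ℝ) :
    HasDerivAt Phi (Real.exp (-d ^ 2 / 2) / Real.sqrt (2 * Real.pi)) d := by
  set f : ℝ → ℝ := fun u => Real.exp (-u ^ 2 / 2) / Real.sqrt (2 * Real.pi) with hf
  have hc : Continuous f := by
    exact ((Real.continuous_exp.comp (by continuity)).div_const _)
  have hint := gauss_integrable
  have heq : Phi = fun x => Phi 0 + ∫ u in (0:ℝ)..x, f u := by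
    funext x
    have := intervalIntegral.integral_Iic_sub_Iic hint.integrableOn hint.integrableOn
      (a := (0:ℝ)) (b := x)
    simp only [Phi]
    linarith [this]
  rw [heq]
  exact (intervalIntegral.integral_hasDerivAt_right hint.intervalIntegrable
    (hc.stronglyMeasurableAtFilter _ _) hc.continuousAt).const_add (Phi 0)

/-- Strike delta of the crisis-model call: ∂C/∂K = -e^{-rτ}Φ(d₂). -/
theorem crisis_strike_delta (s K σ α r t T : ℝ)
    (hs : 0 < s) (hK : 0 < K) (hσ : 0 < σ) (hα : 0 ≤ α)
    (ht : 0 ≤ t) (htT : t < T)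
    (h1 : 0 < s + α / σ * Real.exp (r * t))
    (h2 : 0 < K + α / σ * Real.exp (r * T)) :
    HasDerivAt (fun k => C s k σ α r t T)
      (-(Real.exp (-r * (T - t)) * Phi (d2 s K σ α r t T))) K := by
  set S : ℝ := s + α / σ * Real.exp (r * t) with hS
  set B : ℝ := α / σ * Real.exp (r * T) with hB
  set A : ℝ := α / σ * Real.exp (r * t) with hA
  set E : ℝ := Real.exp (-r * (T - t)) with hE
  have hτ : 0 < T - t := by linarith
  have hsqrt : 0 < Real.sqrt (T - t) := Real.sqrt_pos.mpr hτ
  have hsq : 0 < σ * Real.sqrt (T - t) := mul_pos hσ hsqrt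
  set q : ℝ := σ * Real.sqrt (T - t) with hq
  have hKB : (0:ℝ) < K + B := h2
  -- derivative of inner quotient
  have hinner : HasDerivAt (fun k : ℝ => S / (k + B))
      ((0 * (K + B) - S * 1) / (K + B) ^ 2) K :=
    (hasDerivAt_const K S).div ((hasDerivAt_id K).add_const B) (ne_of_gt hKB)
  have hpos : 0 < S / (K + B) := div_pos h1 hKB
  have hlog : HasDerivAt (fun k : ℝ => Real.log (S / (k + B)))
      (((0 * (K + B) - S * 1) / (K + B) ^ 2) / (S / (K + B))) K :=
    hinner.log (ne_of_gt hpos)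
  set D : ℝ := (((0 * (K + B) - S * 1) / (K + B) ^ 2) / (S / (K + B))) / q with hD
  have hDval : D = -(1 / ((K + B) * q)) := by
    rw [hD]
    field_simp
    ring
  have hd1 : HasDerivAt (fun k : ℝ => d1 s k σ α r t T) D K :=
    (hlog.add_const ((r + σ ^ 2 / 2) * (T - t))).div_const q
  have hd2 : HasDerivAt (fun k : ℝ => d2 s k σ α r t T) D K := hd1.sub_const q
  set φ1 : ℝ := Real.exp (-(d1 s K σ α r t T) ^ 2 / 2) / Real.sqrt (2 * Real.pi) with hφ1
  set φ2 : ℝ := Real.exp (-(d2 s K σ α r t T) ^ 2 / 2) / Real.sqrt (2 * Real.pi) with hφ2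
  have hP1 : HasDerivAt (fun k : ℝ => Phi (d1 s k σ α r t T)) (φ1 * D) K :=
    (hasDerivAt_Phi _).comp K hd1
  have hP2 : HasDerivAt (fun k : ℝ => Phi (d2 s k σ α r t T)) (φ2 * D) K :=
    (hasDerivAt_Phi _).comp K hd2
  have hlin : HasDerivAt (fun k : ℝ => k * E + A) (1 * E) K :=
    ((hasDerivAt_id K).mul_const E).add_const A
  have hCder : HasDerivAt (fun k : ℝ => C s k σ α r t T)
      (S * (φ1 * D) - (1 * E * Phi (d2 s K σ α r t T) + (K * E + A) * (φ2 * D))) K :=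
    (hP1.const_mul S).sub (hlin.mul hP2)
  -- key identity : S * φ1 = (K * E + A) * φ2
  have hd1q : d1 s K σ α r t T * q =
      Real.log (S / (K + B)) + (r + σ ^ 2 / 2) * (T - t) := by
    rw [d1, div_mul_cancel₀ _ (ne_of_gt hsq)]
  have hq2 : q ^ 2 = σ ^ 2 * (T - t) := by
    rw [hq, mul_pow, Real.sq_sqrt hτ.le]
  have hkey : S * φ1 = (K * E + A) * φ2 := by
    have hexp : Real.exp (-(d2 s K σ α r t T) ^ 2 / 2)
        = Real.exp (-(d1 s K σ α r t T) ^ 2 / 2) * (S / (K + B)) * Real.exp (r * (T - t)) := by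
      rw [← Real.exp_log hpos, ← Real.exp_add, ← Real.exp_add]
      congr 1
      have : d2 s K σ α r t T = d1 s K σ α r t T - q := rfl
      rw [this]
      have expand : -(d1 s K σ α r t T - q) ^ 2 / 2
          = -(d1 s K σ α r t T) ^ 2 / 2 + (d1 s K σ α r t T * q - q ^ 2 / 2) := by ring
      rw [expand, hd1q, hq2]
      ring
    have hKEA : K * E + A = (K + B) * E := by
      have h3 : Real.exp (r * T) * E = Real.exp (r * t) := by
        rw [hE, ← Real.exp_add]; congr 1; ring
      rw [hA, hB, add_mul, mul_assoc, h3]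
    have hEe : E * Real.exp (r * (T - t)) = 1 := by
      rw [hE, ← Real.exp_add]; ring_nf; exact Real.exp_zero
    have hdiv : (K + B) / (K + B) = 1 := div_self (ne_of_gt hKB)
    rw [hKEA, hφ1, hφ2, hexp]
    set e1 : ℝ := Real.exp (-(d1 s K σ α r t T) ^ 2 / 2) with he1
    set X : ℝ := Real.exp (r * (T - t)) with hX
    calc S * (e1 / Real.sqrt (2 * Real.pi))
        = (E * X) * ((K + B) / (K + B)) * (S * (e1 / Real.sqrt (2 * Real.pi))) := by
          rw [hEe, hdiv]; ring
      _ = (K + B) * E * (e1 * (S / (K + B)) * X / Real.sqrt (2 * Real.pi)) := by ring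
  have hfinal : S * (φ1 * D) - (1 * E * Phi (d2 s K σ α r t T) + (K * E + A) * (φ2 * D))
      = -(E * Phi (d2 s K σ α r t T)) := by
    have : S * (φ1 * D) = (K * E + A) * (φ2 * D) := by
      rw [← mul_assoc, ← mul_assoc, hkey]
    linarith [this]
  rw [← hfinal]
  exact hCder
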